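/- For every ω-regular language A ⊆ 𝒜^ω there exists a closed guarded RLL expression e with A = L(e). -/

import Mathlib

namespace RLL

/-- Right-linear lattice (RLL) expressions over alphabet `𝒜`, with de Bruijn variables. -/
inductive Expr (𝒜 : Type) : Type
  | var : ℕ → Expr 𝒜
  | letter : 𝒜 → Expr 𝒜 → Expr 𝒜
  | zero : Expr 𝒜
  | plus : Expr 𝒜 → Expr 𝒜 → Expr 𝒜
  | top : Expr 𝒜
  | inter : Expr 𝒜 → Expr 𝒜 → Expr 𝒜
  | mu : Expr 𝒜 → Expr 𝒜
  | nu : Expr 𝒜 → Expr 𝒜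
  deriving DecidableEq

namespace Expr

variable {𝒜 : Type}

/-- Renaming of de Bruijn variables. -/
def rename (f : ℕ → ℕ) : Expr 𝒜 → Expr 𝒜
  | var n => var (f n)
  | letter a e => letter a (rename f e)
  | zero => zero
  | plus e g => plus (rename f e) (rename f g)
  | top => top
  | inter e g => inter (rename f e) (rename f g)
  | mu e => mu (rename (fun n => match n with | 0 => 0 | m + 1 => f m + 1) e)
  | nu e => nu (rename (fun n => match n with | 0 => 0 | m + 1 => f m + 1) e)

/-- Simultaneous substitution. -/
def subst (σ : ℕ → Expr 𝒜) : Expr 𝒜 → Expr 𝒜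
  | var n => σ n
  | letter a e => letter a (subst σ e)
  | zero => zero
  | plus e g => plus (subst σ e) (subst σ g)
  | top => top
  | inter e g => inter (subst σ e) (subst σ g)
  | mu e => mu (subst (fun n => match n with | 0 => var 0 | m + 1 => rename Nat.succ (σ m)) e)
  | nu e => nu (subst (fun n => match n with | 0 => var 0 | m + 1 => rename Nat.succ (σ m)) e)

/-- Substitute `f` for the variable with de Bruijn index `0` (used for unfolding
fixed points: `σX e(X) ↦ e(σX e(X))`). -/
def subst0 (f : Expr 𝒜) (e : Expr 𝒜) : Expr 𝒜 :=
  subst (fun n => match n with | 0 => f | m + 1 => var m) e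

/-- All free variables of `e` are `< n`. -/
def ClosedUnder : Expr 𝒜 → ℕ → Prop
  | var m, n => m < n
  | letter _ e, n => ClosedUnder e n
  | zero, _ => True
  | plus e f, n => ClosedUnder e n ∧ ClosedUnder f n
  | top, _ => True
  | inter e f, n => ClosedUnder e n ∧ ClosedUnder f n
  | mu e, n => ClosedUnder e (n + 1)
  | nu e, n => ClosedUnder e (n + 1)

/-- `e` has no free variables. -/
def Closed (e : Expr 𝒜) : Prop := ClosedUnder e 0

/-- `GuardedIn e U` : no variable of `U` occurs in `e` outside the scope of a letter `a·`,
and every variable bound in `e` is separated from its binder by a letter.  -/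
def GuardedIn : Expr 𝒜 → Set ℕ → Prop
  | var n, U => n ∉ U
  | letter _ e, _ => GuardedIn e ∅
  | zero, _ => True
  | plus e f, U => GuardedIn e U ∧ GuardedIn f U
  | top, _ => True
  | inter e f, U => GuardedIn e U ∧ GuardedIn f U
  | mu e, U => GuardedIn e (insert 0 ((· + 1) '' U))
  | nu e, U => GuardedIn e (insert 0 ((· + 1) '' U))

/-- A (closed) expression is guarded if each of its variable occurrences occurs free
in a subexpression of the form `a·f`. -/
def Guarded (e : Expr 𝒜) : Prop := GuardedIn e ∅

/-- The size of an expression. -/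
def size : Expr 𝒜 → ℕ
  | var _ => 1
  | letter _ e => size e + 1
  | zero => 1
  | plus e f => size e + size f + 1
  | top => 1
  | inter e f => size e + size f + 1
  | mu e => size e + 1
  | nu e => size e + 1

end Expr

/-- ω-words over `𝒜`. -/
abbrev Word (𝒜 : Type) := ℕ → 𝒜

/-- ω-languages over `𝒜`. -/
abbrev OLang (𝒜 : Type) := Set (Word 𝒜)

variable {𝒜 : Type}

/-- The tail of an ω-word. -/
def wtail (w : Word 𝒜) : Word 𝒜 := fun n => w (n + 1)

/-- Prepend a letter to an ω-word. -/
def wcons (a : 𝒜) (w : Word 𝒜) : Word 𝒜 := fun n => match n with | 0 => a | m + 1 => w m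

/-- Extend an environment (interpretation of de Bruijn variables) by a language for
variable `0`. -/
def consEnv (A : OLang 𝒜) (ρ : ℕ → OLang 𝒜) : ℕ → OLang 𝒜 :=
  fun n => match n with | 0 => A | m + 1 => ρ m

/-- The language semantics of RLL expressions, relative to an environment interpreting
free variables (this corresponds to admitting languages as constants).  `μ` and `ν` are
interpreted via the Knaster–Tarski characterisation of least and greatest fixed points. -/
def lang (ρ : ℕ → OLang 𝒜) : Expr 𝒜 → OLang 𝒜
  | Expr.var n => ρ n
  | Expr.letter a e => {w | w 0 = a ∧ wtail w ∈ lang ρ e}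
  | Expr.zero => ∅
  | Expr.plus e f => lang ρ e ∪ lang ρ f
  | Expr.top => Set.univ
  | Expr.inter e f => lang ρ e ∩ lang ρ f
  | Expr.mu e => ⋂₀ {A : OLang 𝒜 | lang (consEnv A ρ) e ⊆ A}
  | Expr.nu e => ⋃₀ {A : OLang 𝒜 | A ⊆ lang (consEnv A ρ) e}

/-- The language of a (closed) expression. -/
def Lang0 (e : Expr 𝒜) : OLang 𝒜 := lang (fun _ => ∅) e

/-- The Fischer–Ladner relation `→_FL`. -/
inductive FLStep : Expr 𝒜 → Expr 𝒜 → Prop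
  | letter (a : 𝒜) (e : Expr 𝒜) : FLStep (Expr.letter a e) e
  | plusL (e f : Expr 𝒜) : FLStep (Expr.plus e f) e
  | plusR (e f : Expr 𝒜) : FLStep (Expr.plus e f) f
  | interL (e f : Expr 𝒜) : FLStep (Expr.inter e f) e
  | interR (e f : Expr 𝒜) : FLStep (Expr.inter e f) f
  | mu (e : Expr 𝒜) : FLStep (Expr.mu e) (Expr.subst0 (Expr.mu e) e)
  | nu (e : Expr 𝒜) : FLStep (Expr.nu e) (Expr.subst0 (Expr.nu e) e)

/-- `f ≤_FL e` : the reflexive-transitive closure of `→_FL`. -/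
def FLle (f e : Expr 𝒜) : Prop := Relation.ReflTransGen FLStep e f

/-- The Fischer–Ladner closure of `e`. -/
def FL (e : Expr 𝒜) : Set (Expr 𝒜) := {f | FLle f e}

/-- `f <_FL e`. -/
def FLlt (f e : Expr 𝒜) : Prop := FLle f e ∧ ¬ FLle e f

/-- Immediate (strict) subformula relation: `SubStep e f` iff `e` is an immediate
subexpression of `f`. -/
inductive SubStep : Expr 𝒜 → Expr 𝒜 → Prop
  | letter (a : 𝒜) (e : Expr 𝒜) : SubStep e (Expr.letter a e)
  | plusL (e f : Expr 𝒜) : SubStep e (Expr.plus e f)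
  | plusR (e f : Expr 𝒜) : SubStep f (Expr.plus e f)
  | interL (e f : Expr 𝒜) : SubStep e (Expr.inter e f)
  | interR (e f : Expr 𝒜) : SubStep f (Expr.inter e f)
  | mu (e : Expr 𝒜) : SubStep e (Expr.mu e)
  | nu (e : Expr 𝒜) : SubStep e (Expr.nu e)

/-- The subformula order `e ⊑ f`. -/
def Subformula (e f : Expr 𝒜) : Prop := Relation.ReflTransGen SubStep e f

/-- `e` is a `μ`-formula. -/
def IsMu (e : Expr 𝒜) : Prop := ∃ f, e = Expr.mu f

/-- `e` is a `ν`-formula. -/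
def IsNu (e : Expr 𝒜) : Prop := ∃ f, e = Expr.nu f

/-- `x` occurs infinitely often in the sequence `t`. -/
def InfOcc {α : Type*} (t : ℕ → α) (x : α) : Prop := ∀ N, ∃ n, N ≤ n ∧ t n = x

end RLL
namespace RLL

variable {𝒜 : Type}

/-- The finite segment `w[i..j)` of an ω-word. -/
def segment (w : Word 𝒜) (i j : ℕ) : List 𝒜 := (List.range (j - i)).map fun k => w (i + k)

/-- `w ∈ B · C^ω` : `w` decomposes as a word of `B` followed by infinitely many
(nonempty) words of `C`. -/
def MemOmegaProd (B C : Language 𝒜) (w : Word 𝒜) : Prop :=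
  ∃ idx : ℕ → ℕ, (∀ k, idx k < idx (k + 1)) ∧ segment w 0 (idx 0) ∈ B ∧
    ∀ k, segment w (idx k) (idx (k + 1)) ∈ C

/-- A language of ω-words is ω-regular if it is a finite union `⋃_{i<n} B_i C_i^ω` with
`B_i, C_i` regular languages of finite words and `ε ∉ C_i`. -/
def IsOmegaRegular (L : OLang 𝒜) : Prop :=
  ∃ (n : ℕ) (B C : Fin n → Language 𝒜),
    (∀ i, (B i).IsRegular) ∧ (∀ i, (C i).IsRegular) ∧ (∀ i, [] ∉ C i) ∧
    L = {w | ∃ i, MemOmegaProd (B i) (C i) w}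

end RLL
namespace RLL

variable {𝒜 : Type}

/-! ### Words -/

def prepend (u : List 𝒜) (w : Word 𝒜) : Word 𝒜 := u.foldr wcons w

def wdrop (n : ℕ) (w : Word 𝒜) : Word 𝒜 := fun k => w (n + k)

@[simp] lemma prepend_nil (w : Word 𝒜) : prepend [] w = w := rfl
@[simp] lemma prepend_cons (a : 𝒜) (u : List 𝒜) (w : Word 𝒜) :
    prepend (a :: u) w = wcons a (prepend u w) := rfl

lemma prepend_append (u v : List 𝒜) (w : Word 𝒜) :
    prepend (u ++ v) w = prepend u (prepend v w) := by
  simp [prepend, List.foldr_append]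

@[simp] lemma wcons_zero (a : 𝒜) (w : Word 𝒜) : wcons a w 0 = a := rfl
@[simp] lemma wcons_succ (a : 𝒜) (w : Word 𝒜) (n : ℕ) : wcons a w (n + 1) = w n := rfl
@[simp] lemma wtail_wcons (a : 𝒜) (w : Word 𝒜) : wtail (wcons a w) = w := rfl

lemma wcons_head_tail (w : Word 𝒜) : wcons (w 0) (wtail w) = w := by
  funext n; cases n <;> rfl

@[simp] lemma wdrop_zero (w : Word 𝒜) : wdrop 0 w = w := by funext k; simp [wdrop]

lemma wdrop_wdrop (m n : ℕ) (w : Word 𝒜) : wdrop m (wdrop n w) = wdrop (n + m) w := by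
  funext k; simp [wdrop, Nat.add_assoc]

lemma wdrop_succ_wcons (n : ℕ) (a : 𝒜) (w : Word 𝒜) :
    wdrop (n + 1) (wcons a w) = wdrop n w := by
  funext k
  show wcons a w (n + 1 + k) = w (n + k)
  have : n + 1 + k = (n + k) + 1 := by omega
  rw [this]; rfl

lemma segment_zero (w : Word 𝒜) (i : ℕ) : segment w i i = [] := by
  simp [segment]

lemma segment_succ (w : Word 𝒜) (n : ℕ) :
    segment w 0 (n + 1) = w 0 :: segment (wtail w) 0 n := by
  simp only [segment, Nat.sub_zero, List.range_succ_eq_map, List.map_cons, List.map_map]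
  refine congrArg₂ _ rfl ?_
  apply List.map_congr_left
  intro k _
  simp [wtail, Function.comp, Nat.add_comm]

lemma segment_prepend (u : List 𝒜) (w : Word 𝒜) :
    segment (prepend u w) 0 u.length = u := by
  induction u generalizing w with
  | nil => simp [segment]
  | cons a u ih => rw [List.length_cons, segment_succ]; simp [ih]

lemma wdrop_prepend (u : List 𝒜) (w : Word 𝒜) : wdrop u.length (prepend u w) = w := by
  induction u generalizing w with
  | nil => simp
  | cons a u ih => rw [List.length_cons, prepend_cons, wdrop_succ_wcons, ih]

lemma prepend_segment_wdrop (n : ℕ) (w : Word 𝒜) :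
    prepend (segment w 0 n) (wdrop n w) = w := by
  induction n generalizing w with
  | zero => simp [segment_zero]
  | succ n ih =>
      rw [segment_succ, prepend_cons]
      have h1 : wdrop (n + 1) w = wdrop n (wtail w) := by
        funext k; show w (n + 1 + k) = w (n + k + 1); congr 1; omega
      rw [h1, ih]
      exact wcons_head_tail w

lemma segment_wdrop (m i j : ℕ) (w : Word 𝒜) :
    segment (wdrop m w) i j = segment w (m + i) (m + j) := by
  simp only [segment, wdrop]
  have h : m + j - (m + i) = j - i := by omega
  rw [h]
  apply List.map_congr_left
  intro k _
  congr 1; omega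

end RLL
namespace RLL

open scoped Computability

variable {𝒜 : Type}

/-! ### Concatenation of a language of finite words with an ω-language -/

def Cat (P : Language 𝒜) (L : OLang 𝒜) : OLang 𝒜 :=
  {w | ∃ u ∈ P, ∃ v ∈ L, w = prepend u v}

def OmegaIter (P : Language 𝒜) : OLang 𝒜 :=
  {w | ∃ idx : ℕ → ℕ, idx 0 = 0 ∧ (∀ k, idx k < idx (k + 1)) ∧
    ∀ k, segment w (idx k) (idx (k + 1)) ∈ P}

lemma Cat_mono {P Q : Language 𝒜} {L M : OLang 𝒜} (h1 : P ≤ Q) (h2 : L ⊆ M) :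
    Cat P L ⊆ Cat Q M := by
  rintro w ⟨u, hu, v, hv, rfl⟩
  exact ⟨u, h1 hu, v, h2 hv, rfl⟩

lemma Cat_add (P Q : Language 𝒜) (L : OLang 𝒜) :
    Cat (P + Q) L = Cat P L ∪ Cat Q L := by
  ext w
  constructor
  · rintro ⟨u, hu, v, hv, rfl⟩
    rcases (Language.mem_add P Q u).1 hu with h | h
    · exact Or.inl ⟨u, h, v, hv, rfl⟩
    · exact Or.inr ⟨u, h, v, hv, rfl⟩
  · rintro (⟨u, hu, v, hv, rfl⟩ | ⟨u, hu, v, hv, rfl⟩)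
    · exact ⟨u, (Language.mem_add P Q u).2 (Or.inl hu), v, hv, rfl⟩
    · exact ⟨u, (Language.mem_add P Q u).2 (Or.inr hu), v, hv, rfl⟩

lemma Cat_mul (P Q : Language 𝒜) (L : OLang 𝒜) :
    Cat (P * Q) L = Cat P (Cat Q L) := by
  ext w
  constructor
  · rintro ⟨u, hu, v, hv, rfl⟩
    rcases Language.mem_mul.1 hu with ⟨x, hx, y, hy, rfl⟩
    exact ⟨x, hx, prepend y v, ⟨y, hy, v, hv, rfl⟩, prepend_append x y v⟩
  · rintro ⟨x, hx, _, ⟨y, hy, v, hv, rfl⟩, rfl⟩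
    exact ⟨x ++ y, Language.append_mem_mul hx hy, v, hv, (prepend_append x y v).symm⟩

/-- Least fixed point characterisation: `⋂₀ {A | N·L ∪ M·A ⊆ A} = M∗·N·L`. -/
lemma sInter_cat (M N : Language 𝒜) (L : OLang 𝒜) :
    ⋂₀ {A : OLang 𝒜 | Cat N L ∪ Cat M A ⊆ A} = Cat (M∗ * N) L := by
  apply le_antisymm
  · apply Set.sInter_subset_of_mem
    show Cat N L ∪ Cat M (Cat (M∗ * N) L) ⊆ Cat (M∗ * N) L
    apply Set.union_subset
    · apply Cat_mono _ (le_refl _)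
      calc N = 1 * N := (one_mul N).symm
        _ ≤ M∗ * N := mul_le_mul_left one_le_kstar N
    · rw [← Cat_mul, ← mul_assoc]
      apply Cat_mono _ (le_refl _)
      exact mul_le_mul_left mul_kstar_le_kstar N
  · rintro w ⟨u, hu, v, hv, rfl⟩
    rcases Language.mem_mul.1 hu with ⟨x, hx, y, hy, rfl⟩
    rcases Language.mem_kstar.1 hx with ⟨Bl, rfl, hBl⟩
    intro A hA
    clear hu hx
    induction Bl with
    | nil =>
        apply hA
        exact Or.inl ⟨y, hy, v, hv, by simp⟩
    | cons b Bl ih =>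
        apply hA
        refine Or.inr ⟨b, hBl b (by simp), prepend (Bl.flatten ++ y) v, ?_, ?_⟩
        · exact ih (fun z hz => hBl z (by simp [hz]))
        · rw [← prepend_append]
          simp

/-- Greatest fixed point characterisation: if `ε ∉ N` then
`⋃₀ {A | A ⊆ N·A} = N^ω`. -/
lemma sUnion_cat (N : Language 𝒜) (hN : [] ∉ N) :
    ⋃₀ {A : OLang 𝒜 | A ⊆ Cat N A} = OmegaIter N := by
  apply le_antisymm
  · rintro w ⟨A, hA, hw⟩
    have key : ∀ x ∈ A, ∃ n : ℕ, 0 < n ∧ segment x 0 n ∈ N ∧ wdrop n x ∈ A := by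
      intro x hx
      rcases hA hx with ⟨u, hu, v, hv, rfl⟩
      refine ⟨u.length, ?_, ?_, ?_⟩
      · cases u with
        | nil => exact absurd hu hN
        | cons a u => simp
      · rw [segment_prepend]; exact hu
      · rw [wdrop_prepend]; exact hv
    choose! f hpos hseg hdrop using key
    let idx : ℕ → ℕ := fun k =>
      Nat.rec 0 (fun _ prev => prev + f (wdrop prev w)) k
    have hidx : ∀ k, idx (k + 1) = idx k + f (wdrop (idx k) w) := fun k => rfl
    have hmem : ∀ k, wdrop (idx k) w ∈ A := by
      intro k
      induction k with
      | zero =>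
          show wdrop (idx 0) w ∈ A
          have : idx 0 = 0 := rfl
          rw [this, wdrop_zero]; exact hw
      | succ k ih =>
          rw [hidx, ← wdrop_wdrop]
          exact hdrop _ ih
    refine ⟨idx, rfl, ?_, ?_⟩
    · intro k
      have := hpos _ (hmem k)
      rw [hidx]
      omega
    · intro k
      have h2 := hseg _ (hmem k)
      rw [segment_wdrop] at h2
      rw [hidx]
      simpa using h2
  · intro w hw
    refine ⟨OmegaIter N, ?_, hw⟩
    rintro x ⟨idx, h0, hinc, hblk⟩
    refine ⟨segment x 0 (idx 1), ?_, wdrop (idx 1) x, ?_, (prepend_segment_wdrop _ _).symm⟩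
    · have := hblk 0; rwa [h0] at this
    · have hmono : ∀ k, idx 1 ≤ idx (k + 1) := by
        intro k
        induction k with
        | zero => exact le_refl _
        | succ k ih => exact le_of_lt (lt_of_le_of_lt ih (hinc (k+1)))
      refine ⟨fun k => idx (k + 1) - idx 1, by simp, ?_, ?_⟩
      · intro k
        show idx (k + 1) - idx 1 < idx (k + 1 + 1) - idx 1
        have := hinc (k + 1)
        have := hmono k
        omega
      · intro k
        show segment (wdrop (idx 1) x) (idx (k+1) - idx 1) (idx (k+1+1) - idx 1) ∈ N
        rw [segment_wdrop]
        have h1 : idx 1 + (idx (k+1) - idx 1) = idx (k+1) := by have := hmono k; omega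
        have h2 : idx 1 + (idx (k+1+1) - idx 1) = idx (k+1+1) := by have := hmono (k+1); omega
        rw [h1, h2]
        exact hblk (k + 1)

end RLL
namespace RLL

open scoped Computability

variable {𝒜 : Type}

/-! ### Semantics of renaming -/

lemma lang_rename (e : Expr 𝒜) : ∀ (f : ℕ → ℕ) (ρ : ℕ → OLang 𝒜),
    lang ρ (e.rename f) = lang (fun n => ρ (f n)) e := by
  induction e with
  | var n => intro f ρ; rfl
  | letter a e ih => intro f ρ; show {w | _ ∧ wtail w ∈ lang ρ (e.rename f)} = _; rw [ih]; rfl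
  | zero => intro f ρ; rfl
  | plus e g ihe ihg =>
      intro f ρ
      show lang ρ (e.rename f) ∪ lang ρ (g.rename f) = _
      rw [ihe, ihg]; rfl
  | top => intro f ρ; rfl
  | inter e g ihe ihg =>
      intro f ρ
      show lang ρ (e.rename f) ∩ lang ρ (g.rename f) = _
      rw [ihe, ihg]; rfl
  | mu e ih =>
      intro f ρ
      have h : ∀ A : OLang 𝒜,
          lang (consEnv A ρ) (e.rename (fun n => match n with | 0 => 0 | m + 1 => f m + 1))
            = lang (consEnv A (fun n => ρ (f n))) e := by
        intro A
        rw [ih]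
        refine congrArg (fun ρ' => lang ρ' e) ?_
        funext n; cases n <;> rfl
      simp only [Expr.rename, lang]
      simp only [h]
  | nu e ih =>
      intro f ρ
      have h : ∀ A : OLang 𝒜,
          lang (consEnv A ρ) (e.rename (fun n => match n with | 0 => 0 | m + 1 => f m + 1))
            = lang (consEnv A (fun n => ρ (f n))) e := by
        intro A
        rw [ih]
        refine congrArg (fun ρ' => lang ρ' e) ?_
        funext n; cases n <;> rfl
      simp only [Expr.rename, lang]
      simp only [h]

/-! ### Guardedness and closedness lemmas -/

lemma guardedIn_anti (e : Expr 𝒜) : ∀ U V : Set ℕ, U ⊆ V →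
    e.GuardedIn V → e.GuardedIn U := by
  induction e with
  | var n => intro U V h hV hn; exact hV (h hn)
  | letter a e ih => intro U V h hV; exact hV
  | zero => intro U V h hV; trivial
  | plus e g ihe ihg => intro U V h hV; exact ⟨ihe _ _ h hV.1, ihg _ _ h hV.2⟩
  | top => intro U V h hV; trivial
  | inter e g ihe ihg => intro U V h hV; exact ⟨ihe _ _ h hV.1, ihg _ _ h hV.2⟩
  | mu e ih =>
      intro U V h hV
      exact ih _ _ (Set.insert_subset_insert (Set.image_mono h)) hV
  | nu e ih =>
      intro U V h hV
      exact ih _ _ (Set.insert_subset_insert (Set.image_mono h)) hV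

private lemma lift_preimage (f : ℕ → ℕ) (U : Set ℕ) :
    (fun n => match n with | 0 => 0 | m + 1 => f m + 1) ⁻¹' (insert 0 ((· + 1) '' U))
      = insert 0 ((· + 1) '' (f ⁻¹' U)) := by
  ext n
  cases n with
  | zero => simp
  | succ m =>
      simp only [Set.mem_preimage, Set.mem_insert_iff, Set.mem_image]
      constructor
      · rintro (h | ⟨k, hk, hke⟩)
        · exact absurd h (by omega)
        · refine Or.inr ⟨m, ?_, rfl⟩
          have hk' : k = f m := by omega
          rwa [hk'] at hk
      · rintro (h | ⟨k, hk, hke⟩)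
        · exact absurd h (by omega)
        · refine Or.inr ⟨f m, ?_, ?_⟩
          · have hk' : k = m := by omega
            rwa [hk'] at hk
          · rfl

lemma guardedIn_rename (e : Expr 𝒜) : ∀ (f : ℕ → ℕ) (U : Set ℕ),
    e.GuardedIn (f ⁻¹' U) → (e.rename f).GuardedIn U := by
  induction e with
  | var n => intro f U h; exact h
  | letter a e ih =>
      intro f U h
      exact ih f ∅ (by simpa [Expr.GuardedIn] using h)
  | zero => intro f U h; trivial
  | plus e g ihe ihg => intro f U h; exact ⟨ihe f U h.1, ihg f U h.2⟩
  | top => intro f U h; trivial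
  | inter e g ihe ihg => intro f U h; exact ⟨ihe f U h.1, ihg f U h.2⟩
  | mu e ih =>
      intro f U h
      apply ih
      rw [lift_preimage]
      exact h
  | nu e ih =>
      intro f U h
      apply ih
      rw [lift_preimage]
      exact h

lemma closedUnder_rename (e : Expr 𝒜) : ∀ (f : ℕ → ℕ) (n n' : ℕ),
    e.ClosedUnder n → (∀ m < n, f m < n') → (e.rename f).ClosedUnder n' := by
  induction e with
  | var m => intro f n n' h hf; exact hf m h
  | letter a e ih => intro f n n' h hf; exact ih f n n' h hf
  | zero => intro f n n' h hf; trivial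
  | plus e g ihe ihg => intro f n n' h hf; exact ⟨ihe f n n' h.1 hf, ihg f n n' h.2 hf⟩
  | top => intro f n n' h hf; trivial
  | inter e g ihe ihg => intro f n n' h hf; exact ⟨ihe f n n' h.1 hf, ihg f n n' h.2 hf⟩
  | mu e ih =>
      intro f n n' h hf
      refine ih _ (n+1) (n'+1) h ?_
      intro m hm
      cases m with
      | zero => show (0:ℕ) < n' + 1; omega
      | succ m => have := hf m (by omega); show f m + 1 < n' + 1; omega
  | nu e ih =>
      intro f n n' h hf
      refine ih _ (n+1) (n'+1) h ?_
      intro m hm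
      cases m with
      | zero => show (0:ℕ) < n' + 1; omega
      | succ m => have := hf m (by omega); show f m + 1 < n' + 1; omega

lemma closedUnder_mono (e : Expr 𝒜) : ∀ {m n : ℕ}, m ≤ n →
    e.ClosedUnder m → e.ClosedUnder n := by
  induction e with
  | var k => intro m n h hk; exact lt_of_lt_of_le hk h
  | letter a e ih => intro m n h hk; exact ih h hk
  | zero => intro m n h hk; trivial
  | plus e g ihe ihg => intro m n h hk; exact ⟨ihe h hk.1, ihg h hk.2⟩
  | top => intro m n h hk; trivial
  | inter e g ihe ihg => intro m n h hk; exact ⟨ihe h hk.1, ihg h hk.2⟩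
  | mu e ih => intro m n h hk; exact ih (by omega) hk
  | nu e ih => intro m n h hk; exact ih (by omega) hk

/-! ### Finite sums of expressions -/

def sumList : List (Expr 𝒜) → Expr 𝒜
  | [] => Expr.zero
  | e :: l => Expr.plus e (sumList l)

lemma mem_lang_sumList (ρ : ℕ → OLang 𝒜) (l : List (Expr 𝒜)) (w : Word 𝒜) :
    w ∈ lang ρ (sumList l) ↔ ∃ e ∈ l, w ∈ lang ρ e := by
  induction l with
  | nil => simp [sumList, lang]
  | cons e l ih =>
      show w ∈ lang ρ e ∪ lang ρ (sumList l) ↔ _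
      simp only [Set.mem_union, ih, List.mem_cons]
      constructor
      · rintro (h | ⟨g, hg, hw⟩)
        · exact ⟨e, Or.inl rfl, h⟩
        · exact ⟨g, Or.inr hg, hw⟩
      · rintro ⟨g, (rfl | hg), hw⟩
        · exact Or.inl hw
        · exact Or.inr ⟨g, hg, hw⟩

lemma guardedIn_sumList (l : List (Expr 𝒜)) (U : Set ℕ)
    (h : ∀ e ∈ l, Expr.GuardedIn e U) : (sumList l).GuardedIn U := by
  induction l with
  | nil => trivial
  | cons e l ih =>
      exact ⟨h e (by simp), ih (fun g hg => h g (by simp [hg]))⟩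

lemma closedUnder_sumList (l : List (Expr 𝒜)) (n : ℕ)
    (h : ∀ e ∈ l, Expr.ClosedUnder e n) : (sumList l).ClosedUnder n := by
  induction l with
  | nil => trivial
  | cons e l ih =>
      exact ⟨h e (by simp), ih (fun g hg => h g (by simp [hg]))⟩

end RLL
namespace RLL

open scoped Computability

variable {𝒜 σ : Type}

/-! ### Paths in a deterministic transition structure -/

/-- `NEp δ S p u q`: `u` is a nonempty word labelling a path from `p` to `q`
all of whose intermediate states lie in `S`. -/
def NEp (δ : σ → 𝒜 → σ) (S : Set σ) : σ → List 𝒜 → σ → Prop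
  | p, [a], q => δ p a = q
  | p, a :: b :: u, q => δ p a ∈ S ∧ NEp δ S (δ p a) (b :: u) q
  | _, [], _ => False

lemma NEp_nil {δ : σ → 𝒜 → σ} {S : Set σ} {p q : σ} : ¬ NEp δ S p [] q := fun h => h

lemma NEp_ne_nil {δ : σ → 𝒜 → σ} {S : Set σ} {p q : σ} {u : List 𝒜}
    (h : NEp δ S p u q) : u ≠ [] := by
  rintro rfl; exact NEp_nil h

lemma NEp_mono (δ : σ → 𝒜 → σ) {S T : Set σ} (hST : S ⊆ T) :
    ∀ (u : List 𝒜) (p q : σ), NEp δ S p u q → NEp δ T p u q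
  | [], _, _, h => h.elim
  | [a], _, _, h => h
  | a :: b :: u, p, q, h => ⟨hST h.1, NEp_mono δ hST (b :: u) (δ p a) q h.2⟩

lemma NEp_append (δ : σ → 𝒜 → σ) (S : Set σ) :
    ∀ (u : List 𝒜) {p r q : σ} (v : List 𝒜),
      NEp δ S p u r → r ∈ S → NEp δ S r v q → NEp δ S p (u ++ v) q
  | [], _, _, _, _, h, _, _ => h.elim
  | [a], p, r, q, v, h, hr, hv => by
      cases v with
      | nil => exact (NEp_nil hv).elim
      | cons b v' =>
          show δ p a ∈ S ∧ NEp δ S (δ p a) (b :: v') q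
          rw [h]
          exact ⟨hr, hv⟩
  | a :: b :: u, p, r, q, v, h, hr, hv =>
      ⟨h.1, NEp_append δ S (b :: u) v h.2 hr hv⟩

/-- The language of nonempty words labelling paths from `p` to `q` through `S`. -/
def LNE (δ : σ → 𝒜 → σ) (S : Set σ) (p q : σ) : Language 𝒜 := {u | NEp δ S p u q}

lemma glue_aux (δ : σ → 𝒜 → σ) (S : Set σ) (s p q : σ) (t : List 𝒜)
    (ht : t ∈ LNE δ S s q) :
    ∀ (Lb : List (List 𝒜)), (∀ y ∈ Lb, y ∈ LNE δ S s s) →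
      ∀ (x : List 𝒜), NEp δ (insert s S) p x s →
      NEp δ (insert s S) p (x ++ (Lb.flatten ++ t)) q := by
  intro Lb
  induction Lb with
  | nil =>
      intro _ x hx
      show NEp δ (insert s S) p (x ++ ([] ++ t)) q
      rw [List.nil_append]
      exact NEp_append δ _ x t hx (Set.mem_insert s S)
        (NEp_mono δ (Set.subset_insert s S) t s q ht)
  | cons b Lb ih =>
      intro hL x hx
      have h1 : x ++ ((b :: Lb).flatten ++ t) = (x ++ b) ++ (Lb.flatten ++ t) := by
        simp [List.append_assoc]
      rw [h1]
      apply ih (fun y hy => hL y (by simp [hy]))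
      exact NEp_append δ _ x b hx (Set.mem_insert s S)
        (NEp_mono δ (Set.subset_insert s S) b s s (hL b (by simp)))

lemma LNE_insert_sub (δ : σ → 𝒜 → σ) (S : Set σ) (s : σ) :
    ∀ (u : List 𝒜) (p q : σ), NEp δ (insert s S) p u q →
      u ∈ LNE δ S p q + LNE δ S p s * ((LNE δ S s s)∗ * LNE δ S s q)
  | [], _, _, h => h.elim
  | [a], p, q, h => (Language.mem_add _ _ _).2 (Or.inl h)
  | a :: b :: u, p, q, h => by
      obtain ⟨hmem, hrest⟩ := h
      have IH := LNE_insert_sub δ S s (b :: u) (δ p a) q hrest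
      rcases (Language.mem_add _ _ _).1 IH with IH | IH
      · rcases Set.mem_insert_iff.1 hmem with heq | hS
        · -- δ p a = s
          refine (Language.mem_add _ _ _).2 (Or.inr ?_)
          have h1 : ([a] : List 𝒜) ∈ LNE δ S p s := heq
          have h2 : (b :: u) ∈ (LNE δ S s s)∗ * LNE δ S s q :=
            Language.append_mem_mul (Language.nil_mem_kstar _) (heq ▸ IH)
          exact Language.append_mem_mul h1 h2
        · exact (Language.mem_add _ _ _).2 (Or.inl ⟨hS, IH⟩)
      · rcases Language.mem_mul.1 IH with ⟨x, hx, y, hy, hxy⟩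
        rcases Set.mem_insert_iff.1 hmem with heq | hS
        · -- δ p a = s : the whole rest lies in the star part
          refine (Language.mem_add _ _ _).2 (Or.inr ?_)
          have h1 : ([a] : List 𝒜) ∈ LNE δ S p s := heq
          have hx' : x ∈ LNE δ S s s := heq ▸ hx
          rcases Language.mem_mul.1 hy with ⟨z, hz, t, ht, hzt⟩
          have hle : LNE δ S s s * (LNE δ S s s)∗ ≤ (LNE δ S s s)∗ := mul_kstar_le_kstar
          have h2 : (x ++ z) ∈ (LNE δ S s s)∗ :=
            hle (Language.append_mem_mul hx' hz)
          have h3 : (x ++ z) ++ t ∈ (LNE δ S s s)∗ * LNE δ S s q :=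
            Language.append_mem_mul h2 ht
          have h4 : b :: u = (x ++ z) ++ t := by rw [← hxy, ← hzt, List.append_assoc]
          have := Language.append_mem_mul h1 h3
          rwa [← h4] at this
        · refine (Language.mem_add _ _ _).2 (Or.inr ?_)
          have h1 : (a :: x) ∈ LNE δ S p s := by
            cases x with
            | nil => exact ((NEp_nil (δ := δ) (S := S) (p := δ p a) (q := s)) hx).elim
            | cons c x' => exact ⟨hS, hx⟩
          have := Language.append_mem_mul h1 hy
          have h4 : a :: b :: u = (a :: x) ++ y := by
            rw [List.cons_append, hxy]
          rwa [← h4] at this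

lemma LNE_insert (δ : σ → 𝒜 → σ) (S : Set σ) (s p q : σ) :
    LNE δ (insert s S) p q
      = LNE δ S p q + LNE δ S p s * ((LNE δ S s s)∗ * LNE δ S s q) := by
  ext u
  constructor
  · exact LNE_insert_sub δ S s u p q
  · intro h
    rcases (Language.mem_add _ _ _).1 h with h | h
    · exact NEp_mono δ (Set.subset_insert s S) u p q h
    · rcases Language.mem_mul.1 h with ⟨x, hx, yz, hyz, hu⟩
      rcases Language.mem_mul.1 hyz with ⟨z, hz, t, ht, hyz'⟩
      rcases Language.mem_kstar.1 hz with ⟨Lb, rfl, hLb⟩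
      have := glue_aux δ S s p q t ht Lb hLb x
        (NEp_mono δ (Set.subset_insert s S) x p s hx)
      rw [hyz', hu] at this; exact this

/-! ### The expression computing `LNE · K` -/

open Classical in
/-- State-elimination construction: an RLL expression denoting
`LNE δ {x | x ∈ S} p q · K`. -/
noncomputable def cne [Fintype 𝒜] (δ : σ → 𝒜 → σ) : List σ → σ → σ → Expr 𝒜 → Expr 𝒜
  | [], p, q, K =>
      sumList ((Finset.univ : Finset 𝒜).toList.map fun a =>
        if δ p a = q then Expr.letter a K else Expr.zero)
  | s :: S, p, q, K =>
      Expr.plus (cne δ S p q K)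
        (cne δ S p s
          (Expr.mu (Expr.plus (cne δ S s q (K.rename Nat.succ)) (cne δ S s s (Expr.var 0)))))

lemma lang_cne [Fintype 𝒜] (δ : σ → 𝒜 → σ) :
    ∀ (S : List σ) (p q : σ) (K : Expr 𝒜) (ρ : ℕ → OLang 𝒜),
      lang ρ (cne δ S p q K) = Cat (LNE δ {x | x ∈ S} p q) (lang ρ K) := by
  intro S
  induction S with
  | nil =>
      intro p q K ρ
      ext w
      constructor
      · intro hw
        rcases (mem_lang_sumList ρ _ w).1 hw with ⟨e, he, hwe⟩
        rcases List.mem_map.1 he with ⟨a, _, rfl⟩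
        by_cases h : δ p a = q
        · rw [if_pos h] at hwe
          obtain ⟨h0, htail⟩ := hwe
          refine ⟨[a], h, wtail w, htail, ?_⟩
          rw [prepend_cons, prepend_nil, ← h0]
          exact (wcons_head_tail w).symm
        · rw [if_neg h] at hwe
          exact absurd hwe (by simp [lang])
      · rintro ⟨u, hu, v, hv, rfl⟩
        cases u with
        | nil => exact ((NEp_nil (δ := δ) (S := {x | x ∈ ([] : List σ)}) (p := p) (q := q)) hu).elim
        | cons a u =>
          cases u with
          | nil =>
              have hq : δ p a = q := hu
              apply (mem_lang_sumList ρ _ _).2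
              refine ⟨Expr.letter a K, List.mem_map.2 ⟨a, by simp, by rw [if_pos hq]⟩, ?_, ?_⟩
              · rfl
              · show wtail (wcons a v) ∈ lang ρ K
                rwa [wtail_wcons]
          | cons b u =>
              have h1 : δ p a ∈ {x : σ | x ∈ ([] : List σ)} := hu.1
              simp at h1
  | cons s S ih =>
      intro p q K ρ
      have hset : {x : σ | x ∈ s :: S} = insert s {x : σ | x ∈ S} := by
        ext x; simp [List.mem_cons]
      have hY : lang ρ (Expr.mu (Expr.plus (cne δ S s q (K.rename Nat.succ))
          (cne δ S s s (Expr.var 0))))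
          = Cat ((LNE δ {x | x ∈ S} s s)∗ * LNE δ {x | x ∈ S} s q) (lang ρ K) := by
        have hbody : ∀ A : OLang 𝒜,
            lang (consEnv A ρ) (Expr.plus (cne δ S s q (K.rename Nat.succ))
              (cne δ S s s (Expr.var 0)))
            = Cat (LNE δ {x | x ∈ S} s q) (lang ρ K) ∪ Cat (LNE δ {x | x ∈ S} s s) A := by
          intro A
          show lang (consEnv A ρ) (cne δ S s q (K.rename Nat.succ))
              ∪ lang (consEnv A ρ) (cne δ S s s (Expr.var 0)) = _
          rw [ih, ih]
          have h1 : lang (consEnv A ρ) (K.rename Nat.succ) = lang ρ K := by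
            rw [lang_rename]
            exact congrArg (fun ρ' => lang ρ' K) (funext fun n => rfl)
          rw [h1]
          rfl
        show ⋂₀ {A | lang (consEnv A ρ) _ ⊆ A} = _
        simp only [hbody]
        exact sInter_cat _ _ _
      show lang ρ (cne δ S p q K) ∪ lang ρ (cne δ S p s _) = _
      rw [ih, ih, hY, ← Cat_mul, ← Cat_add, ← LNE_insert, ← hset]

lemma guardedIn_cne [Fintype 𝒜] (δ : σ → 𝒜 → σ) :
    ∀ (S : List σ) (p q : σ) (K : Expr 𝒜), K.GuardedIn ∅ →
      ∀ U : Set ℕ, (cne δ S p q K).GuardedIn U := by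
  intro S
  induction S with
  | nil =>
      intro p q K hK U
      apply guardedIn_sumList
      intro e he
      rcases List.mem_map.1 he with ⟨a, _, rfl⟩
      by_cases h : δ p a = q
      · rw [if_pos h]; exact hK
      · rw [if_neg h]; trivial
  | cons s S ih =>
      intro p q K hK U
      refine ⟨ih p q K hK U, ?_⟩
      apply ih
      show Expr.GuardedIn _ (insert 0 ((· + 1) '' ∅))
      constructor
      · apply ih
        apply guardedIn_rename
        simpa using hK
      · apply ih
        show (0 : ℕ) ∉ (∅ : Set ℕ)
        simp

lemma closedUnder_cne [Fintype 𝒜] (δ : σ → 𝒜 → σ) :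
    ∀ (S : List σ) (p q : σ) (K : Expr 𝒜) (n : ℕ), K.ClosedUnder n →
      (cne δ S p q K).ClosedUnder n := by
  intro S
  induction S with
  | nil =>
      intro p q K n hK
      apply closedUnder_sumList
      intro e he
      rcases List.mem_map.1 he with ⟨a, _, rfl⟩
      by_cases h : δ p a = q
      · rw [if_pos h]; exact hK
      · rw [if_neg h]; trivial
  | cons s S ih =>
      intro p q K n hK
      refine ⟨ih p q K n hK, ?_⟩
      apply ih
      show Expr.ClosedUnder _ (n + 1)
      constructor
      · exact ih _ _ _ _ (closedUnder_rename K Nat.succ n (n+1) hK (fun m hm => by omega))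
      · exact ih _ _ _ _ (show (0:ℕ) < n + 1 by omega)

end RLL
namespace RLL

open scoped Computability

variable {𝒜 σ : Type}

/-! ### DFA glue -/

lemma NEp_univ_iff (M : DFA 𝒜 σ) :
    ∀ (u : List 𝒜) (p q : σ), u ≠ [] →
      (NEp M.step Set.univ p u q ↔ M.evalFrom p u = q)
  | [], _, _, h => absurd rfl h
  | [a], p, q, _ => by
      show M.step p a = q ↔ _
      rw [DFA.evalFrom_singleton]
  | a :: b :: u, p, q, _ => by
      show (M.step p a ∈ Set.univ ∧ NEp M.step Set.univ (M.step p a) (b :: u) q) ↔ _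
      rw [show M.evalFrom p (a :: b :: u) = M.evalFrom (M.step p a) (b :: u) from rfl]
      rw [← NEp_univ_iff M (b :: u) (M.step p a) q (by simp)]
      simp

/-- Nonempty accepted words of a DFA. -/
def NEacc (M : DFA 𝒜 σ) : Language 𝒜 :=
  {u | u ≠ [] ∧ M.evalFrom M.start u ∈ M.accept}

lemma nil_not_mem_NEacc (M : DFA 𝒜 σ) : [] ∉ NEacc M := fun h => h.1 rfl

lemma NEacc_eq {M : DFA 𝒜 σ} {C : Language 𝒜} (hM : M.accepts = C) (hC : [] ∉ C) :
    NEacc M = C := by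
  ext u
  constructor
  · rintro ⟨hne, hacc⟩
    rw [← hM]
    exact hacc
  · intro hu
    refine ⟨?_, ?_⟩
    · rintro rfl; exact hC hu
    · rw [← hM] at hu; exact hu

lemma univlist_set [Fintype σ] :
    {x : σ | x ∈ (Finset.univ : Finset σ).toList} = Set.univ := by
  ext x; simp

open Classical in
/-- Sum over accepting states of the state-elimination expressions. -/
noncomputable def accSum [Fintype 𝒜] [Fintype σ] (M : DFA 𝒜 σ) (K : Expr 𝒜) : Expr 𝒜 :=
  sumList ((Finset.univ : Finset σ).toList.map fun q =>
    if q ∈ M.accept then cne M.step (Finset.univ : Finset σ).toList M.start q K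
    else Expr.zero)

open Classical in
/-- Expression denoting `M.accepts · K`. -/
noncomputable def dfaCat [Fintype 𝒜] [Fintype σ] (M : DFA 𝒜 σ) (K : Expr 𝒜) : Expr 𝒜 :=
  Expr.plus (if M.start ∈ M.accept then K else Expr.zero) (accSum M K)

/-- Expression denoting `M.accepts^ω`. -/
noncomputable def dfaOmega [Fintype 𝒜] [Fintype σ] (M : DFA 𝒜 σ) : Expr 𝒜 :=
  Expr.nu (accSum M (Expr.var 0))

lemma lang_accSum [Fintype 𝒜] [Fintype σ] (M : DFA 𝒜 σ) (K : Expr 𝒜) (ρ : ℕ → OLang 𝒜) :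
    lang ρ (accSum M K) = Cat (NEacc M) (lang ρ K) := by
  classical
  ext w
  unfold accSum
  constructor
  · intro hw
    rcases (mem_lang_sumList ρ _ w).1 hw with ⟨e, he, hw⟩
    rcases List.mem_map.1 he with ⟨q, _, rfl⟩
    by_cases hq : q ∈ M.accept
    · rw [if_pos hq] at hw
      rw [lang_cne, univlist_set] at hw
      rcases hw with ⟨u, hu, v, hv, rfl⟩
      have hne : u ≠ [] := NEp_ne_nil hu
      have heval : M.evalFrom M.start u = q := (NEp_univ_iff M u M.start q hne).1 hu
      exact ⟨u, ⟨hne, heval ▸ hq⟩, v, hv, rfl⟩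
    · rw [if_neg hq] at hw
      exact absurd hw (by simp [lang])
  · rintro ⟨u, ⟨hne, hacc⟩, v, hv, rfl⟩
    apply (mem_lang_sumList ρ _ _).2
    refine ⟨if M.evalFrom M.start u ∈ M.accept then
        cne M.step (Finset.univ : Finset σ).toList M.start (M.evalFrom M.start u) K
      else Expr.zero, List.mem_map.2 ⟨M.evalFrom M.start u, by simp, rfl⟩, ?_⟩
    rw [if_pos hacc, lang_cne, univlist_set]
    exact ⟨u, (NEp_univ_iff M u M.start _ hne).2 rfl, v, hv, rfl⟩

lemma lang_dfaOmega [Fintype 𝒜] [Fintype σ] (M : DFA 𝒜 σ) (ρ : ℕ → OLang 𝒜) :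
    lang ρ (dfaOmega M) = OmegaIter (NEacc M) := by
  show ⋃₀ {A | A ⊆ lang (consEnv A ρ) (accSum M (Expr.var 0))} = _
  have h : ∀ A : OLang 𝒜,
      lang (consEnv A ρ) (accSum M (Expr.var 0)) = Cat (NEacc M) A := by
    intro A
    rw [lang_accSum]
    rfl
  simp only [h]
  exact sUnion_cat _ (nil_not_mem_NEacc M)

lemma lang_dfaCat [Fintype 𝒜] [Fintype σ] (M : DFA 𝒜 σ) (K : Expr 𝒜) (ρ : ℕ → OLang 𝒜) :
    lang ρ (dfaCat M K) = Cat M.accepts (lang ρ K) := by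
  classical
  have hstart : M.eval ([] : List 𝒜) = M.start := rfl
  show lang ρ (if M.start ∈ M.accept then K else Expr.zero) ∪ lang ρ (accSum M K) = _
  rw [lang_accSum]
  ext w
  constructor
  · rintro (hw | hw)
    · by_cases hst : M.start ∈ M.accept
      · rw [if_pos hst] at hw
        exact ⟨[], (DFA.mem_accepts M).2 (hstart ▸ hst), w, hw, (prepend_nil w).symm⟩
      · rw [if_neg hst] at hw
        exact absurd hw (by simp [lang])
    · rcases hw with ⟨u, ⟨hne, hacc⟩, v, hv, rfl⟩
      exact ⟨u, (DFA.mem_accepts M).2 hacc, v, hv, rfl⟩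
  · rintro ⟨u, hu, v, hv, rfl⟩
    cases u with
    | nil =>
        left
        have hst : M.start ∈ M.accept := hstart ▸ (DFA.mem_accepts M).1 hu
        rw [if_pos hst]
        exact hv
    | cons a u' =>
        right
        exact ⟨a :: u', ⟨by simp, (DFA.mem_accepts M).1 hu⟩, v, hv, rfl⟩

/-! ### Closedness and guardedness of the constructions -/

lemma guardedIn_dfaOmega [Fintype 𝒜] [Fintype σ] (M : DFA 𝒜 σ) (U : Set ℕ) :
    (dfaOmega M).GuardedIn U := by
  show Expr.GuardedIn (accSum M (Expr.var 0)) (insert 0 ((· + 1) '' U))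
  unfold accSum
  apply guardedIn_sumList
  intro e he
  rcases List.mem_map.1 he with ⟨q, _, rfl⟩
  by_cases hq : q ∈ M.accept
  · rw [if_pos hq]
    apply guardedIn_cne
    show (0 : ℕ) ∉ (∅ : Set ℕ)
    simp
  · rw [if_neg hq]; trivial

lemma closedUnder_dfaOmega [Fintype 𝒜] [Fintype σ] (M : DFA 𝒜 σ) (n : ℕ) :
    (dfaOmega M).ClosedUnder n := by
  show Expr.ClosedUnder (accSum M (Expr.var 0)) (n + 1)
  unfold accSum
  apply closedUnder_sumList
  intro e he
  rcases List.mem_map.1 he with ⟨q, _, rfl⟩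
  by_cases hq : q ∈ M.accept
  · rw [if_pos hq]
    apply closedUnder_cne
    show (0 : ℕ) < n + 1
    omega
  · rw [if_neg hq]; trivial

lemma guardedIn_dfaCat [Fintype 𝒜] [Fintype σ] (M : DFA 𝒜 σ) (K : Expr 𝒜)
    (hK : ∀ U : Set ℕ, K.GuardedIn U) (U : Set ℕ) : (dfaCat M K).GuardedIn U := by
  classical
  constructor
  · by_cases hst : M.start ∈ M.accept
    · rw [if_pos hst]; exact hK U
    · rw [if_neg hst]; trivial
  · unfold accSum
    apply guardedIn_sumList
    intro e he
    rcases List.mem_map.1 he with ⟨q, _, rfl⟩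
    by_cases hq : q ∈ M.accept
    · rw [if_pos hq]; exact guardedIn_cne M.step _ M.start q K (hK ∅) U
    · rw [if_neg hq]; trivial

lemma closedUnder_dfaCat [Fintype 𝒜] [Fintype σ] (M : DFA 𝒜 σ) (K : Expr 𝒜) (n : ℕ)
    (hK : K.ClosedUnder n) : (dfaCat M K).ClosedUnder n := by
  classical
  constructor
  · by_cases hst : M.start ∈ M.accept
    · rw [if_pos hst]; exact hK
    · rw [if_neg hst]; trivial
  · unfold accSum
    apply closedUnder_sumList
    intro e he
    rcases List.mem_map.1 he with ⟨q, _, rfl⟩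
    by_cases hq : q ∈ M.accept
    · rw [if_pos hq]; exact closedUnder_cne M.step _ M.start q K n hK
    · rw [if_neg hq]; trivial

/-! ### `B · C^ω` via `Cat` and `OmegaIter` -/

lemma memOmegaProd_iff (B C : Language 𝒜) (w : Word 𝒜) :
    MemOmegaProd B C w ↔ w ∈ Cat B (OmegaIter C) := by
  constructor
  · rintro ⟨idx, hinc, hB, hblk⟩
    have hmono : ∀ k, idx 0 ≤ idx k := by
      intro k
      induction k with
      | zero => exact le_refl _
      | succ k ih => exact le_of_lt (lt_of_le_of_lt ih (hinc k))
    refine ⟨segment w 0 (idx 0), hB, wdrop (idx 0) w,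
      ⟨fun k => idx k - idx 0, by simp, ?_, ?_⟩, (prepend_segment_wdrop _ _).symm⟩
    · intro k
      show idx k - idx 0 < idx (k + 1) - idx 0
      have h1 := hinc k
      have h2 := hmono k
      omega
    · intro k
      show segment (wdrop (idx 0) w) (idx k - idx 0) (idx (k + 1) - idx 0) ∈ C
      rw [segment_wdrop]
      have h1 : idx 0 + (idx k - idx 0) = idx k := by have := hmono k; omega
      have h2 : idx 0 + (idx (k+1) - idx 0) = idx (k+1) := by have := hmono (k+1); omega
      rw [h1, h2]
      exact hblk k
  · rintro ⟨u, hu, v, ⟨idx, h0, hinc, hblk⟩, rfl⟩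
    refine ⟨fun k => u.length + idx k, ?_, ?_, ?_⟩
    · intro k
      show u.length + idx k < u.length + idx (k + 1)
      have := hinc k; omega
    · show segment (prepend u v) 0 (u.length + idx 0) ∈ B
      have h1 : u.length + idx 0 = u.length := by omega
      rw [h1, segment_prepend]
      exact hu
    · intro k
      show segment (prepend u v) (u.length + idx k) (u.length + idx (k + 1)) ∈ C
      have h2 : segment (prepend u v) (u.length + idx k) (u.length + idx (k+1))
          = segment v (idx k) (idx (k+1)) := by
        rw [← segment_wdrop, wdrop_prepend]
      rw [h2]
      exact hblk k

end RLL
namespace RLL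

/-- For every ω-regular language `A ⊆ 𝒜^ω` there exists a closed
guarded RLL expression `e` with `A = L(e)`. -/
theorem omega_regular_denoted_by_guarded_expression {𝒜 : Type} [Fintype 𝒜]
    (A : OLang 𝒜) (hA : IsOmegaRegular A) :
    ∃ e : Expr 𝒜, e.Closed ∧ e.Guarded ∧ Lang0 e = A := by
  obtain ⟨n, B, C, hB, hC, hCe, hAeq⟩ := hA
  choose σB instB MB hMB using hB
  choose σC instC MC hMC using hC
  refine ⟨sumList ((List.finRange n).map fun i =>
    @dfaCat 𝒜 (σB i) _ (instB i) (MB i) (@dfaOmega 𝒜 (σC i) _ (instC i) (MC i))), ?_, ?_, ?_⟩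
  · apply closedUnder_sumList
    intro g hg
    rcases List.mem_map.1 hg with ⟨i, _, rfl⟩
    letI := instB i; letI := instC i
    exact closedUnder_dfaCat (MB i) _ 0 (closedUnder_dfaOmega (MC i) 0)
  · apply guardedIn_sumList
    intro g hg
    rcases List.mem_map.1 hg with ⟨i, _, rfl⟩
    letI := instB i; letI := instC i
    exact guardedIn_dfaCat (MB i) _ (fun U => guardedIn_dfaOmega (MC i) U) ∅
  · rw [hAeq]
    ext w
    have hmem : ∀ i : Fin n, (w ∈ lang (fun _ => (∅ : OLang 𝒜))
        (@dfaCat 𝒜 (σB i) _ (instB i) (MB i) (@dfaOmega 𝒜 (σC i) _ (instC i) (MC i))))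
        ↔ MemOmegaProd (B i) (C i) w := by
      intro i
      letI := instB i; letI := instC i
      rw [lang_dfaCat, lang_dfaOmega, NEacc_eq (hMC i) (hCe i), hMB i, memOmegaProd_iff]
    constructor
    · intro hw
      rcases (mem_lang_sumList _ _ _).1 hw with ⟨g, hg, hwg⟩
      rcases List.mem_map.1 hg with ⟨i, _, rfl⟩
      exact ⟨i, (hmem i).1 hwg⟩
    · rintro ⟨i, hw⟩
      apply (mem_lang_sumList _ _ _).2
      exact ⟨_, List.mem_map.2 ⟨i, List.mem_finRange i, rfl⟩, (hmem i).2 hw⟩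

end RLL
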